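/- With Ğ(y,x) as defined, for any fixed y ∈ (0,1/2) the second derivative of Ğ(y,x) with respect to x satisfies ∂²Ğ/∂x² = -(1-y)·log²(2)·((1-2y)/(2-2y-2^x·(1-2y)) + 2^{-x}·log(1 + (2y-1)·2^x/(2-2y))) < 0 for all x ∈ (0,1); hence x ↦ Ğ(y,x) is strictly concave on (0,1). -/

import Mathlib

/-- Two-point (Bernoulli) Kullback–Leibler divergence (natural log). -/
noncomputable def klBer (a b : ℝ) : ℝ :=
  a * Real.log (a / b) + (1 - a) * Real.log ((1 - a) / (1 - b))

/-- Binary entropy (base 2). -/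
noncomputable def binEnt (x : ℝ) : ℝ := -x * Real.logb 2 x - (1 - x) * Real.logb 2 (1 - x)

/-- `y_{(x)} = y + (1-y)(2^{1-x} - 1)`. -/
noncomputable def yOf (y x : ℝ) : ℝ := y + (1 - y) * ((2 : ℝ) ^ (1 - x) - 1)

/-- The function `G(y, y', x)`. -/
noncomputable def Gfun (y y' x : ℝ) : ℝ :=
  x / 2 * klBer y (1 / 2) + y' * klBer (y / y') ((2 : ℝ) ^ (-(1 - x)))
    - klBer y (1 / 2) + 1 / 2 * klBer y' ((2 : ℝ) ^ (-x))

/-- `Ğ(y,x) = G(y, y_{(x)}, x)`. -/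
noncomputable def Gbr (y x : ℝ) : ℝ := Gfun y (yOf y x) x

noncomputable def Faux (y x : ℝ) : ℝ :=
  (x / 2 - 1) * (y * Real.log (2 * y) + (1 - y) * Real.log (2 * (1 - y)))
  + y * Real.log (2 * y)
  + ((1 - y) * Real.log (2 * (1 - y))) * (2 : ℝ) ^ (-x)
  + ((1 - y) * (1 - (2 : ℝ) ^ (-x)) - 1 / 2) *
      (Real.log (2 * (2 : ℝ) ^ (-x) * (1 - y) - (1 - 2 * y)) + x * Real.log 2)

noncomputable def F1aux (y x : ℝ) : ℝ :=
  (y * Real.log (2 * y) + (1 - y) * Real.log (2 * (1 - y))) / 2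
  - ((1 - y) * Real.log (2 * (1 - y)) * Real.log 2) * (2 : ℝ) ^ (-x)
  + ((1 - y) * Real.log 2) * ((2 : ℝ) ^ (-x) *
      (Real.log (2 * (2 : ℝ) ^ (-x) * (1 - y) - (1 - 2 * y)) + x * Real.log 2))
  + ((1 - y) * (1 - (2 : ℝ) ^ (-x)) - 1 / 2) *
      (-(2 * Real.log 2 * (1 - y)) * ((2 : ℝ) ^ (-x) / (2 * (2 : ℝ) ^ (-x) * (1 - y) - (1 - 2 * y)))
        + Real.log 2)

lemma tfacts {x : ℝ} (hx : x ∈ Set.Ioo (0:ℝ) 1) :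
    0 < (2:ℝ)^(-x) ∧ (2:ℝ)^(-x) < 1 ∧ 1/2 < (2:ℝ)^(-x) := by
  obtain ⟨hx0, hx1⟩ := hx
  refine ⟨Real.rpow_pos_of_pos two_pos _, ?_, ?_⟩
  · calc (2:ℝ)^(-x) < (2:ℝ)^(0:ℝ) := by
          exact Real.rpow_lt_rpow_left_iff one_lt_two |>.mpr (by linarith)
       _ = 1 := Real.rpow_zero 2
  · calc (1:ℝ)/2 = (2:ℝ)^(-1:ℝ) := by
          rw [Real.rpow_neg_one]; norm_num
       _ < (2:ℝ)^(-x) := Real.rpow_lt_rpow_left_iff one_lt_two |>.mpr (by linarith)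

lemma gbr_eq (y : ℝ) (hy0 : 0 < y) (hy : y < 1/2) {x : ℝ} (hx : x ∈ Set.Ioo (0:ℝ) 1) :
    Gbr y x = Faux y x := by
  obtain ⟨ht0, ht1, ht2⟩ := tfacts hx
  set t := (2:ℝ)^(-x) with htdef
  have hy1 : y < 1 := by linarith
  obtain ⟨p, hpe⟩ : ∃ p : ℝ, p = 2 * t * (1 - y) - (1 - 2 * y) := ⟨_, rfl⟩
  have hp0 : 0 < p := by rw [hpe]; nlinarith
  have hpy : y < p := by rw [hpe]; nlinarith
  have h2t1 : (0:ℝ) < 2 * t - 1 := by linarith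
  have hyOf : yOf y x = p := by
    unfold yOf
    have h21 : (2:ℝ)^(1 - x) = 2 * t := by
      rw [show (1:ℝ) - x = 1 + (-x) by ring, Real.rpow_add two_pos, Real.rpow_one, htdef]
    rw [h21, hpe]; ring
  have h2x : (2:ℝ)^(-(1 - x)) = 1 / (2 * t) := by
    rw [show -(1 - x) = (-1) + (-(-x)) by ring, Real.rpow_add two_pos,
      Real.rpow_neg_one, Real.rpow_neg (le_of_lt two_pos), htdef]
    field_simp
  have hlt : Real.log t = -x * Real.log 2 := by rw [htdef]; exact Real.log_rpow two_pos _
  have h1 : Real.log (y / (1/2)) = Real.log 2 + Real.log y := by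
    rw [show y / (1/2) = 2 * y by ring, Real.log_mul two_ne_zero (ne_of_gt hy0)]
  have h2 : Real.log ((1 - y) / (1 - 1/2)) = Real.log 2 + Real.log (1 - y) := by
    rw [show (1 - y) / (1 - 1/2) = 2 * (1 - y) by ring,
      Real.log_mul two_ne_zero (by linarith)]
  have h3 : Real.log ((y / p) / (1 / (2 * t))) =
      Real.log 2 + Real.log t + Real.log y - Real.log p := by
    rw [show (y / p) / (1 / (2 * t)) = 2 * t * y / p by field_simp,
      Real.log_div (by positivity) (ne_of_gt hp0),
      Real.log_mul (by positivity) (ne_of_gt hy0),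
      Real.log_mul two_ne_zero (ne_of_gt ht0)]
  have h4 : Real.log ((1 - y / p) / (1 - 1 / (2 * t))) =
      Real.log 2 + Real.log t + Real.log (1 - y) - Real.log p := by
    have e1 : 1 - y / p = (1 - y) * (2 * t - 1) / p := by
      rw [one_sub_div (ne_of_gt hp0), show p - y = (1 - y) * (2 * t - 1) from by linear_combination hpe]
    have e2 : 1 - 1 / (2 * t) = (2 * t - 1) / (2 * t) := by
      field_simp
    have harg : (1 - y / p) / (1 - 1 / (2 * t)) = 2 * t * (1 - y) / p := by
      rw [e1, e2]
      rw [div_div_div_comm]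
      rw [mul_div_assoc]
      rw [div_self (ne_of_gt h2t1)]
      field_simp
    rw [harg, Real.log_div (mul_ne_zero (by positivity) (by linarith : (1:ℝ) - y ≠ 0)) (ne_of_gt hp0),
      Real.log_mul (by positivity : (2:ℝ) * t ≠ 0) (by linarith : (1:ℝ) - y ≠ 0),
      Real.log_mul two_ne_zero (ne_of_gt ht0)]
  have h5 : Real.log (p / t) = Real.log p - Real.log t :=
    Real.log_div (ne_of_gt hp0) (ne_of_gt ht0)
  have h6 : Real.log ((1 - p) / (1 - t)) = Real.log 2 + Real.log (1 - y) := by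
    have harg : (1 - p) / (1 - t) = 2 * (1 - y) := by
      rw [eq_comm, eq_div_iff (by linarith : (1:ℝ) - t ≠ 0)]
      linear_combination hpe
    rw [harg, Real.log_mul two_ne_zero (by linarith)]
  have hGbr : Gbr y x =
      x / 2 * (y * Real.log (y / (1/2)) + (1 - y) * Real.log ((1 - y) / (1 - 1/2)))
      + p * ((y / p) * Real.log ((y / p) / (1 / (2 * t)))
          + (1 - y / p) * Real.log ((1 - y / p) / (1 - 1 / (2 * t))))
      - (y * Real.log (y / (1/2)) + (1 - y) * Real.log ((1 - y) / (1 - 1/2)))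
      + 1 / 2 * (p * Real.log (p / t) + (1 - p) * Real.log ((1 - p) / (1 - t))) := by
    unfold Gbr Gfun klBer
    rw [hyOf, h2x]
  rw [hGbr, h1, h2, h3, h4, h5, h6]
  unfold Faux
  have hfold : Real.log (2 * (2:ℝ)^(-x) * (1 - y) - (1 - 2 * y)) = Real.log p := by
    rw [hpe]
  rw [← htdef, hfold, hlt, Real.log_mul two_ne_zero (ne_of_gt hy0),
    Real.log_mul two_ne_zero (by linarith : (1:ℝ) - y ≠ 0)]
  have hp0' : (0:ℝ) < 2 * t * (1 - y) - (1 - 2 * y) := hpe ▸ hp0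
  field_simp
  rw [hpe]
  ring

lemma hasDerivAt_t (x : ℝ) :
    HasDerivAt (fun x : ℝ => (2:ℝ) ^ (-x)) (-(Real.log 2 * (2:ℝ) ^ (-x))) x := by
  have h := (hasDerivAt_const x (2:ℝ)).rpow ((hasDerivAt_id x).neg) (by norm_num)
  convert h using 1
  simp; ring
  simp

lemma hasDerivAt_F1 (y : ℝ) (hy0 : 0 < y) (hy : y < 1/2) {x : ℝ}
    (ht2 : 1/2 < (2:ℝ)^(-x)) :
    HasDerivAt (Faux y) (F1aux y x) x := by
  set t := (2:ℝ)^(-x) with htdef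
  have hy1 : y < 1 := by linarith
  have hp0 : 0 < 2 * t * (1 - y) - (1 - 2 * y) := by nlinarith
  have hT := hasDerivAt_t x
  have hP : HasDerivAt (fun x : ℝ => 2 * (2:ℝ)^(-x) * (1 - y) - (1 - 2 * y))
      (2 * -(Real.log 2 * t) * (1 - y)) x := by
    exact ((hT.const_mul 2).mul_const (1 - y)).sub_const _
  have hLP : HasDerivAt (fun x : ℝ => Real.log (2 * (2:ℝ)^(-x) * (1 - y) - (1 - 2 * y)))
      ((2 * -(Real.log 2 * t) * (1 - y)) / (2 * t * (1 - y) - (1 - 2 * y))) x :=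
    hP.log (ne_of_gt hp0)
  have hV : HasDerivAt (fun x : ℝ => Real.log (2 * (2:ℝ)^(-x) * (1 - y) - (1 - 2 * y)) + x * Real.log 2)
      ((2 * -(Real.log 2 * t) * (1 - y)) / (2 * t * (1 - y) - (1 - 2 * y)) + Real.log 2) x := by
    have h := hLP.add ((hasDerivAt_id x).mul_const (Real.log 2)); simp only [one_mul] at h; exact h
  have hU : HasDerivAt (fun x : ℝ => (1 - y) * (1 - (2:ℝ)^(-x)) - 1 / 2)
      ((1 - y) * (Real.log 2 * t)) x := by
    have := ((hT.const_sub 1).const_mul (1 - y)).sub_const (1/2 : ℝ)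
    exact this.congr_deriv (by rw [htdef]; ring)
  have h1 : HasDerivAt (fun x : ℝ => (x / 2 - 1) *
      (y * Real.log (2 * y) + (1 - y) * Real.log (2 * (1 - y))))
      ((y * Real.log (2 * y) + (1 - y) * Real.log (2 * (1 - y))) / 2) x := by
    have := (((hasDerivAt_id x).div_const 2).sub_const 1).mul_const
      (y * Real.log (2 * y) + (1 - y) * Real.log (2 * (1 - y)))
    exact this.congr_deriv (by ring)
  have h3 : HasDerivAt (fun x : ℝ => ((1 - y) * Real.log (2 * (1 - y))) * (2:ℝ)^(-x))
      (((1 - y) * Real.log (2 * (1 - y))) * -(Real.log 2 * t)) x := hT.const_mul _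
  have h4 := hU.mul hV
  have hbig := ((h1.add_const (y * Real.log (2 * y))).add h3).add h4
  have hfun : (fun x : ℝ => (x / 2 - 1) *
      (y * Real.log (2 * y) + (1 - y) * Real.log (2 * (1 - y)))
      + y * Real.log (2 * y)
      + ((1 - y) * Real.log (2 * (1 - y))) * (2:ℝ)^(-x)
      + ((1 - y) * (1 - (2:ℝ)^(-x)) - 1 / 2) *
        (Real.log (2 * (2:ℝ)^(-x) * (1 - y) - (1 - 2 * y)) + x * Real.log 2)) = Faux y := rfl
  replace hbig : HasDerivAt (Faux y) _ x := hbig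
  convert hbig using 1
  unfold F1aux
  rw [← htdef]
  field_simp
  ring

set_option maxHeartbeats 2000000 in
lemma hasDerivAt_F2 (y : ℝ) (hy0 : 0 < y) (hy : y < 1/2) {x : ℝ}
    (ht2 : 1/2 < (2:ℝ)^(-x)) :
    HasDerivAt (F1aux y)
      (-(1 - y) * (Real.log 2) ^ 2 *
        ((1 - 2 * y) / (2 - 2 * y - (2 : ℝ) ^ x * (1 - 2 * y))
          + (2 : ℝ) ^ (-x) * Real.log (1 + (2 * y - 1) * (2 : ℝ) ^ x / (2 - 2 * y)))) x := by
  set t := (2:ℝ)^(-x) with htdef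
  have ht0 : 0 < t := Real.rpow_pos_of_pos two_pos _
  have hy1 : y < 1 := by linarith
  have hp0 : 0 < 2 * t * (1 - y) - (1 - 2 * y) := by nlinarith
  have hT := hasDerivAt_t x
  have hP : HasDerivAt (fun x : ℝ => 2 * (2:ℝ)^(-x) * (1 - y) - (1 - 2 * y))
      (2 * -(Real.log 2 * t) * (1 - y)) x :=
    ((hT.const_mul 2).mul_const (1 - y)).sub_const _
  have hLP : HasDerivAt (fun x : ℝ => Real.log (2 * (2:ℝ)^(-x) * (1 - y) - (1 - 2 * y)))
      ((2 * -(Real.log 2 * t) * (1 - y)) / (2 * t * (1 - y) - (1 - 2 * y))) x :=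
    hP.log (ne_of_gt hp0)
  have hV : HasDerivAt (fun x : ℝ => Real.log (2 * (2:ℝ)^(-x) * (1 - y) - (1 - 2 * y)) + x * Real.log 2)
      ((2 * -(Real.log 2 * t) * (1 - y)) / (2 * t * (1 - y) - (1 - 2 * y)) + Real.log 2) x := by
    have h := hLP.add ((hasDerivAt_id x).mul_const (Real.log 2)); simp only [one_mul] at h; exact h
  have hU : HasDerivAt (fun x : ℝ => (1 - y) * (1 - (2:ℝ)^(-x)) - 1 / 2)
      ((1 - y) * (Real.log 2 * t)) x := by
    have := ((hT.const_sub 1).const_mul (1 - y)).sub_const (1/2 : ℝ)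
    exact this.congr_deriv (by rw [htdef]; ring)
  have hQ : HasDerivAt (fun x : ℝ => (2:ℝ)^(-x) / (2 * (2:ℝ)^(-x) * (1 - y) - (1 - 2 * y)))
      ((-(Real.log 2 * t) * (2 * t * (1 - y) - (1 - 2 * y)) - t * (2 * -(Real.log 2 * t) * (1 - y)))
        / (2 * t * (1 - y) - (1 - 2 * y)) ^ 2) x :=
    hT.div hP (ne_of_gt hp0)
  have hW : HasDerivAt (fun x : ℝ =>
      -(2 * Real.log 2 * (1 - y)) * ((2:ℝ)^(-x) / (2 * (2:ℝ)^(-x) * (1 - y) - (1 - 2 * y)))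
        + Real.log 2)
      (-(2 * Real.log 2 * (1 - y)) *
        ((-(Real.log 2 * t) * (2 * t * (1 - y) - (1 - 2 * y)) - t * (2 * -(Real.log 2 * t) * (1 - y)))
        / (2 * t * (1 - y) - (1 - 2 * y)) ^ 2)) x :=
    (hQ.const_mul _).add_const _
  have hbig := (((hasDerivAt_const x
      ((y * Real.log (2 * y) + (1 - y) * Real.log (2 * (1 - y))) / 2)).sub
      (hT.const_mul ((1 - y) * Real.log (2 * (1 - y)) * Real.log 2))).add
      ((hT.mul hV).const_mul ((1 - y) * Real.log 2))).add (hU.mul hW)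
  have hfun : (fun x : ℝ =>
      (y * Real.log (2 * y) + (1 - y) * Real.log (2 * (1 - y))) / 2
      - ((1 - y) * Real.log (2 * (1 - y)) * Real.log 2) * (2:ℝ)^(-x)
      + ((1 - y) * Real.log 2) * ((2:ℝ)^(-x) *
          (Real.log (2 * (2:ℝ)^(-x) * (1 - y) - (1 - 2 * y)) + x * Real.log 2))
      + ((1 - y) * (1 - (2:ℝ)^(-x)) - 1 / 2) *
          (-(2 * Real.log 2 * (1 - y)) * ((2:ℝ)^(-x) / (2 * (2:ℝ)^(-x) * (1 - y) - (1 - 2 * y)))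
            + Real.log 2)) = F1aux y := rfl
  replace hbig : HasDerivAt (F1aux y) _ x := hbig
  convert hbig using 1
  have h2x : (2:ℝ)^x = t⁻¹ := by
    rw [htdef, ← Real.rpow_neg (le_of_lt two_pos), neg_neg]
  have hlt : Real.log t = -x * Real.log 2 := by rw [htdef]; exact Real.log_rpow two_pos _
  have harg : 1 + (2 * y - 1) * (2:ℝ)^x / (2 - 2 * y) =
      (2 * t * (1 - y) - (1 - 2 * y)) / (2 * t * (1 - y)) := by
    rw [h2x]
    field_simp [ht0.ne', (show (2:ℝ) - 2*y ≠ 0 by linarith), (show (1:ℝ) - y ≠ 0 by linarith)]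
    ring
  have hlog : Real.log (1 + (2 * y - 1) * (2:ℝ)^x / (2 - 2 * y)) =
      Real.log (2 * t * (1 - y) - (1 - 2 * y)) - (Real.log 2 + Real.log t + Real.log (1 - y)) := by
    rw [harg, Real.log_div (ne_of_gt hp0) (ne_of_gt (by nlinarith : (0:ℝ) < 2 * t * (1 - y))),
      Real.log_mul (mul_ne_zero two_ne_zero (ne_of_gt ht0)) (by linarith : (1:ℝ) - y ≠ 0),
      Real.log_mul two_ne_zero (ne_of_gt ht0)]
  have hden : 2 - 2 * y - (2:ℝ)^x * (1 - 2 * y) =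
      (2 * t * (1 - y) - (1 - 2 * y)) * t⁻¹ := by
    rw [h2x]; field_simp
  rw [hlog, hden, hlt, Real.log_mul two_ne_zero (by linarith : (1:ℝ) - y ≠ 0)]
  simp only [← htdef]
  have hq : (1 - y) * 2 * t - (1 - y * 2) ≠ 0 := by linarith
  field_simp [ht0.ne', hq]
  ring

/-- The second derivative of `Ğ(y,·)` is given by the stated formula and is negative on
`(0,1)`; hence `x ↦ Ğ(y,x)` is strictly concave on `(0,1)`. -/
theorem Gbr_strictly_concave (y : ℝ) (hy0 : 0 < y) (hy : y < 1 / 2) :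
    (∀ x ∈ Set.Ioo (0 : ℝ) 1,
      deriv (deriv (Gbr y)) x
        = -(1 - y) * (Real.log 2) ^ 2 *
            ((1 - 2 * y) / (2 - 2 * y - (2 : ℝ) ^ x * (1 - 2 * y))
              + (2 : ℝ) ^ (-x) * Real.log (1 + (2 * y - 1) * (2 : ℝ) ^ x / (2 - 2 * y))) ∧
      deriv (deriv (Gbr y)) x < 0) ∧
    StrictConcaveOn ℝ (Set.Ioo (0 : ℝ) 1) (Gbr y) := by
  have hy1 : y < 1 := by linarith
  have hEqOn : Set.EqOn (Gbr y) (Faux y) (Set.Ioo (0:ℝ) 1) :=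
    fun z hz => gbr_eq y hy0 hy hz
  have hd1 : ∀ z ∈ Set.Ioo (0:ℝ) 1, HasDerivAt (Faux y) (F1aux y z) z :=
    fun z hz => hasDerivAt_F1 y hy0 hy (tfacts hz).2.2
  have hderiv1 : ∀ z ∈ Set.Ioo (0:ℝ) 1, deriv (Gbr y) z = F1aux y z := by
    intro z hz
    have hev : Gbr y =ᶠ[nhds z] Faux y :=
      Filter.eventuallyEq_of_mem (isOpen_Ioo.mem_nhds hz) hEqOn
    rw [hev.deriv_eq, (hd1 z hz).deriv]
  have key : ∀ x ∈ Set.Ioo (0:ℝ) 1, deriv (deriv (Gbr y)) x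
      = -(1 - y) * (Real.log 2) ^ 2 *
            ((1 - 2 * y) / (2 - 2 * y - (2 : ℝ) ^ x * (1 - 2 * y))
              + (2 : ℝ) ^ (-x) * Real.log (1 + (2 * y - 1) * (2 : ℝ) ^ x / (2 - 2 * y))) := by
    intro x hx
    have hev : deriv (Gbr y) =ᶠ[nhds x] F1aux y :=
      Filter.eventuallyEq_of_mem (isOpen_Ioo.mem_nhds hx) hderiv1
    rw [hev.deriv_eq, (hasDerivAt_F2 y hy0 hy (tfacts hx).2.2).deriv]
  have hneg : ∀ x ∈ Set.Ioo (0:ℝ) 1,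
      -(1 - y) * (Real.log 2) ^ 2 *
            ((1 - 2 * y) / (2 - 2 * y - (2 : ℝ) ^ x * (1 - 2 * y))
              + (2 : ℝ) ^ (-x) * Real.log (1 + (2 * y - 1) * (2 : ℝ) ^ x / (2 - 2 * y))) < 0 := by
    intro x hx
    obtain ⟨ht0, ht1, ht2⟩ := tfacts hx
    set t := (2:ℝ)^(-x) with htdef
    have hp0 : 0 < 2 * t * (1 - y) - (1 - 2 * y) := by nlinarith
    have hq0 : 0 < 2 * t * (1 - y) := by nlinarith
    have h2x : (2:ℝ)^x = t⁻¹ := by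
      rw [htdef, ← Real.rpow_neg (le_of_lt two_pos), neg_neg]
    have harg : 1 + (2 * y - 1) * (2:ℝ)^x / (2 - 2 * y) =
        (2 * t * (1 - y) - (1 - 2 * y)) / (2 * t * (1 - y)) := by
      rw [h2x]
      field_simp [ht0.ne', (show (2:ℝ) - 2*y ≠ 0 by linarith), (show (1:ℝ) - y ≠ 0 by linarith)]
      ring
    have hden : 2 - 2 * y - (2:ℝ)^x * (1 - 2 * y) =
        (2 * t * (1 - y) - (1 - 2 * y)) * t⁻¹ := by
      rw [h2x]; field_simp
    have hB : Real.log (1 + (2 * y - 1) * (2:ℝ)^x / (2 - 2 * y)) =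
        Real.log (2 * t * (1 - y) - (1 - 2 * y)) - Real.log (2 * t * (1 - y)) := by
      rw [harg, Real.log_div (ne_of_gt hp0) (ne_of_gt hq0)]
    -- key log inequality
    have hz : (0:ℝ) < 2 * t * (1 - y) / (2 * t * (1 - y) - (1 - 2 * y)) := div_pos hq0 hp0
    have hz1 : 2 * t * (1 - y) / (2 * t * (1 - y) - (1 - 2 * y)) ≠ 1 := by
      have : 1 < 2 * t * (1 - y) / (2 * t * (1 - y) - (1 - 2 * y)) :=
        (one_lt_div hp0).mpr (by nlinarith)
      exact ne_of_gt this
    have hlog := Real.log_lt_sub_one_of_pos hz hz1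
    rw [Real.log_div (ne_of_gt hq0) (ne_of_gt hp0)] at hlog
    -- positivity of the bracket
    have hS : 0 < (1 - 2 * y) / (2 - 2 * y - (2:ℝ)^x * (1 - 2 * y))
        + t * Real.log (1 + (2 * y - 1) * (2:ℝ)^x / (2 - 2 * y)) := by
      rw [hB, hden]
      have e1 : (1 - 2 * y) / ((2 * t * (1 - y) - (1 - 2 * y)) * t⁻¹)
          = (1 - 2 * y) * t / (2 * t * (1 - y) - (1 - 2 * y)) := by
        field_simp [ht0.ne', hp0.ne']
        try ring
      rw [e1]
      have e2 : 2 * t * (1 - y) / (2 * t * (1 - y) - (1 - 2 * y)) - 1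
          = (1 - 2 * y) / (2 * t * (1 - y) - (1 - 2 * y)) := by
        field_simp [hp0.ne']
        ring
      rw [e2] at hlog
      have h3 : Real.log (2 * t * (1 - y) - (1 - 2 * y)) - Real.log (2 * t * (1 - y))
          > -((1 - 2 * y) / (2 * t * (1 - y) - (1 - 2 * y))) := by linarith
      have h4 : (1 - 2 * y) * t / (2 * t * (1 - y) - (1 - 2 * y))
          = t * ((1 - 2 * y) / (2 * t * (1 - y) - (1 - 2 * y))) := by ring
      nlinarith [mul_pos ht0 (show (0:ℝ) < (1 - 2 * y) / (2 * t * (1 - y) - (1 - 2 * y))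
          + (Real.log (2 * t * (1 - y) - (1 - 2 * y)) - Real.log (2 * t * (1 - y))) by linarith)]
    have hL2 : 0 < (1 - y) * (Real.log 2) ^ 2 :=
      mul_pos (by linarith) (pow_pos (Real.log_pos one_lt_two) 2)
    have := mul_pos hL2 hS
    nlinarith [this]
  constructor
  · intro x hx
    exact ⟨key x hx, by rw [key x hx]; exact hneg x hx⟩
  · apply strictConcaveOn_of_deriv2_neg (convex_Ioo 0 1)
    · have hFc : ContinuousOn (Faux y) (Set.Ioo (0:ℝ) 1) :=
        fun z hz => ((hd1 z hz).continuousAt).continuousWithinAt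
      exact hFc.congr hEqOn
    · intro x hx
      rw [interior_Ioo] at hx
      have h2 : deriv^[2] (Gbr y) x = deriv (deriv (Gbr y)) x := rfl
      rw [h2, key x hx]
      exact hneg x hx
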